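/- Let a, D, μ > 0 and define V(s) := 4πDas + 8a²√(πDs) for s ≥ 0. Then for every t ≥ 0, ∫₀^t μ e^{−μs} V(s) ds + e^{−μt} V(t) = 4πa(D/μ)(1 − e^{−μt}) + 4πa²√(D/μ)·erf(√(μt)). (Equivalently: if τ is an exponential random variable with rate μ, then the expectation of V(min(τ, t)) equals the stated right-hand side.) -/

import Mathlib

/-- The error function `erf x = (2/√π) ∫₀ˣ e^{-u²} du`. -/
noncomputable def erf (x : ℝ) : ℝ :=
  (2 / Real.sqrt Real.pi) * ∫ u in (0:ℝ)..x, Real.exp (-u ^ 2)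

/-- The mean Wiener-sausage volume `V(s) = 4πDas + 8a²√(πDs)`. -/
noncomputable def sausageVol (a D s : ℝ) : ℝ :=
  4 * Real.pi * D * a * s + 8 * a ^ 2 * Real.sqrt (Real.pi * D * s)

open Real intervalIntegral in
/-- The expectation of `V(min(τ,t))` for an exponential degradation time `τ` of rate `μ`:
`∫₀ᵗ μ e^{−μs} V(s) ds + e^{−μt} V(t) = 4πa(D/μ)(1 − e^{−μt}) + 4πa²√(D/μ)·erf(√(μt))`
(Lemma 2). -/
theorem mean_sausage_volume_degradation (a D mu : ℝ) (ha : 0 < a) (hD : 0 < D)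
    (hmu : 0 < mu) (t : ℝ) (ht : 0 ≤ t) :
    (∫ s in (0:ℝ)..t, mu * Real.exp (-mu * s) * sausageVol a D s)
      + Real.exp (-mu * t) * sausageVol a D t =
    4 * Real.pi * a * (D / mu) * (1 - Real.exp (-mu * t))
      + 4 * Real.pi * a ^ 2 * Real.sqrt (D / mu) * erf (Real.sqrt (mu * t)) := by
  have hπ : (0:ℝ) < Real.pi := Real.pi_pos
  set r := Real.sqrt t with hrdef
  have hr0 : 0 ≤ r := Real.sqrt_nonneg t
  have hrt : r ^ 2 = t := Real.sq_sqrt ht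
  set c1 := Real.sqrt (Real.pi * D) with hc1def
  have hc1 : c1 ^ 2 = Real.pi * D := Real.sq_sqrt (by positivity)
  set sm := Real.sqrt mu with hsmdef
  have hsm : sm ^ 2 = mu := Real.sq_sqrt hmu.le
  have hsm0 : 0 < sm := Real.sqrt_pos.mpr hmu
  -- the Gaussian primitive
  set E : ℝ → ℝ := fun y => ∫ u in (0:ℝ)..y, Real.exp (-u ^ 2) with hEdef
  have hEc : Continuous fun u : ℝ => Real.exp (-u ^ 2) := by fun_prop
  have hE0 : E 0 = 0 := intervalIntegral.integral_same
  have hEd : ∀ y : ℝ, HasDerivAt E (Real.exp (-y ^ 2)) y := fun y =>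
    (hEc.integral_hasStrictDerivAt 0 y).hasDerivAt
  -- step 1: substitution s = x²
  have hgc : Continuous (fun s => mu * Real.exp (-mu * s) * sausageVol a D s) := by
    unfold sausageVol; fun_prop
  have hsub : (∫ s in (0:ℝ)..t, mu * Real.exp (-mu * s) * sausageVol a D s)
      = ∫ x in (0:ℝ)..r, (2 * x) •
          (mu * Real.exp (-mu * x ^ 2) * sausageVol a D (x ^ 2)) := by
    have h := intervalIntegral.integral_comp_smul_deriv (a := 0) (b := r)
      (f := fun x => x ^ 2) (f' := fun x => 2 * x)
      (g := fun s => mu * Real.exp (-mu * s) * sausageVol a D s)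
      (fun x _ => by simpa [two_mul] using hasDerivAt_pow 2 x)
      (by fun_prop) hgc
    simp only [Function.comp] at h
    rw [h]
    norm_num [hrt]
  -- step 2: rewrite integrand as a polynomial × gaussian
  set φ : ℝ → ℝ := fun x =>
    (8 * Real.pi * D * a * mu * x ^ 3 + 16 * a ^ 2 * c1 * mu * x ^ 2)
      * Real.exp (-mu * x ^ 2) with hφdef
  have hcong : (∫ x in (0:ℝ)..r, (2 * x) •
          (mu * Real.exp (-mu * x ^ 2) * sausageVol a D (x ^ 2)))
      = ∫ x in (0:ℝ)..r, φ x := by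
    apply intervalIntegral.integral_congr
    intro x hx
    rw [Set.uIcc_of_le hr0] at hx
    have hx0 : 0 ≤ x := hx.1
    have hsq : Real.sqrt (Real.pi * D * x ^ 2) = c1 * x := by
      rw [Real.sqrt_mul (by positivity), Real.sqrt_sq hx0]
    simp only [smul_eq_mul, sausageVol, hsq, hφdef]
    ring
  -- step 3: explicit antiderivative
  set G : ℝ → ℝ := fun x =>
    -4 * Real.pi * D * a * (Real.exp (-mu * x ^ 2) * (x ^ 2 + 1 / mu))
      - 8 * a ^ 2 * c1 * (x * Real.exp (-mu * x ^ 2))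
      + (8 * a ^ 2 * c1 / sm) * E (sm * x) with hGdef
  have hGd : ∀ x : ℝ, HasDerivAt G (φ x) x := by
    intro x
    have hx2 : HasDerivAt (fun x : ℝ => -mu * x ^ 2) (-mu * (2 * x)) x := by
      simpa [two_mul] using (hasDerivAt_pow 2 x).const_mul (-mu)
    have hexp : HasDerivAt (fun x : ℝ => Real.exp (-mu * x ^ 2))
        (Real.exp (-mu * x ^ 2) * (-mu * (2 * x))) x := hx2.exp
    have hEc2 : HasDerivAt (fun x : ℝ => E (sm * x))
        (Real.exp (-mu * x ^ 2) * sm) x := by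
      have h := HasDerivAt.comp x (hEd (sm * x)) ((hasDerivAt_id x).const_mul sm)
      simp only [Function.comp_def, id_eq, mul_one] at h
      have e : -(sm * x) ^ 2 = -mu * x ^ 2 := by rw [mul_pow, hsm]; ring
      rw [e] at h; exact h
    have h1 := (hexp.mul ((hasDerivAt_pow 2 x).add_const (1 / mu))).const_mul
      (-4 * Real.pi * D * a)
    have h2 := ((hasDerivAt_id x).mul hexp).const_mul (8 * a ^ 2 * c1)
    simp only [id_eq, one_mul] at h1 h2
    have h3 := hEc2.const_mul (8 * a ^ 2 * c1 / sm)
    have h := (h1.sub h2).add h3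
    convert h using 1
    · rfl
    · rfl
    · rfl
    rw [hφdef]
    field_simp
    ring
  have hφc : Continuous φ := by fun_prop
  have hint : (∫ x in (0:ℝ)..r, φ x) = G r - G 0 :=
    intervalIntegral.integral_eq_sub_of_hasDerivAt (fun x _ => hGd x)
      (hφc.intervalIntegrable 0 r)
  -- assemble
  have hsmr : sm * r = Real.sqrt (mu * t) := by
    rw [hsmdef, hrdef, ← Real.sqrt_mul hmu.le]
  have hVt : sausageVol a D t = 4 * Real.pi * D * a * t + 8 * a ^ 2 * (c1 * r) := by
    unfold sausageVol
    rw [show Real.pi * D * t = (Real.pi * D) * t by ring,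
      Real.sqrt_mul (by positivity), hc1def, hrdef]
  have herf : erf (Real.sqrt (mu * t)) = (2 / Real.sqrt Real.pi) * E (Real.sqrt (mu * t)) := rfl
  have hc1split : c1 = Real.sqrt Real.pi * Real.sqrt D := Real.sqrt_mul hπ.le D
  have hDmu : Real.sqrt (D / mu) = Real.sqrt D / sm := by
    rw [hsmdef, Real.sqrt_div hD.le]
  have hsqrtπ : (0:ℝ) < Real.sqrt Real.pi := Real.sqrt_pos.mpr hπ
  have hππ : Real.sqrt Real.pi * Real.sqrt Real.pi = Real.pi := Real.mul_self_sqrt hπ.le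
  rw [hsub, hcong, hint, herf, hVt, hGdef]
  simp only [hE0, mul_zero, hsmr, hrt]
  rw [hc1split, hDmu, ← hππ]
  field_simp
  ring_nf
  rw [Real.sq_sqrt hπ.le, Real.exp_zero]
  rw [Real.sq_sqrt hπ.le]
  ring
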